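/- The number of partitions of n all of whose successive ranks lie in {0,1} equals the number of partitions of n whose successive parts differ by at least 2. -/

import Mathlib

/-- The conjugate partition: `conj π i = #{j ≥ 1 : π j ≥ i}`. -/
noncomputable def conj (π : ℕ → ℕ) (i : ℕ) : ℕ := {j : ℕ | 1 ≤ j ∧ i ≤ π j}.ncard

/-- A partition, as a function from part indices (starting at 1) to part sizes:
nonincreasing on indices ≥ 1, eventually zero, with the unused index 0 set to 0. -/
def IsPartition (π : ℕ → ℕ) : Prop :=
  π 0 = 0 ∧ (∀ i j, 1 ≤ i → i ≤ j → π j ≤ π i) ∧ ∃ N, ∀ j, N ≤ j → π j = 0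

/-- The number partitioned, i.e. the sum of all parts. -/
noncomputable def size (π : ℕ → ℕ) : ℕ := ∑' j, π j

/-- The Durfee square size: the largest `d` with `π d ≥ d`. -/
noncomputable def durfee (π : ℕ → ℕ) : ℕ := sSup {d : ℕ | d ≤ π d}

/-- The number of parts. -/
noncomputable def len (π : ℕ → ℕ) : ℕ := conj π 1

/-- The `i`-th successive rank `r_i = π_i - π'_i`. -/
noncomputable def rank (π : ℕ → ℕ) (i : ℕ) : ℤ := (π i : ℤ) - (conj π i : ℤ)

/-- The `i`-th angle (hook) length `α_i = π_i + π'_i - 2 i + 1`, as an integer. -/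
noncomputable def ang (π : ℕ → ℕ) (i : ℕ) : ℤ := (π i : ℤ) + (conj π i : ℤ) - 2 * i + 1

/-- The partition `α(π)` of angle lengths: `α_i = π_i + π'_i - 2 i + 1` for `1 ≤ i ≤ d(π)`,
and `0` outside that range. -/
noncomputable def angPart (π : ℕ → ℕ) (i : ℕ) : ℕ :=
  if 1 ≤ i ∧ i ≤ durfee π then π i + conj π i + 1 - 2 * i else 0

lemma downward_eq_Icc (S : Set ℕ) (hfin : S.Finite) (h0 : 0 ∉ S)
    (hdc : ∀ j k, j ∈ S → 1 ≤ k → k ≤ j → k ∈ S) : S = Set.Icc 1 S.ncard := by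
  have hicc : ∀ m : ℕ, (Set.Icc 1 m).ncard = m := by
    intro m
    rw [← Finset.coe_Icc, Set.ncard_coe_finset, Nat.card_Icc]; omega
  rcases S.eq_empty_or_nonempty with h | hne
  · simp [h]
  · set m := sSup S with hm
    have hmS : m ∈ S := Nat.sSup_mem hne hfin.bddAbove
    have hSeq : S = Set.Icc 1 m := by
      apply Set.Subset.antisymm
      · intro j hj
        refine ⟨?_, le_csSup hfin.bddAbove hj⟩
        rcases Nat.eq_zero_or_pos j with rfl | h1
        · exact absurd hj h0
        · exact h1
      · intro j hj
        exact hdc m j hmS hj.1 hj.2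
    rw [hSeq, hicc]

lemma conj_set_eq {π : ℕ → ℕ} (hπ : IsPartition π) {i : ℕ} (hi : 1 ≤ i) :
    {j : ℕ | 1 ≤ j ∧ i ≤ π j} = Set.Icc 1 (conj π i) := by
  obtain ⟨N, hN⟩ := hπ.2.2
  have hfin : {j : ℕ | 1 ≤ j ∧ i ≤ π j}.Finite := by
    apply Set.Finite.subset (Set.finite_Iio N)
    rintro j ⟨hj1, hj2⟩
    simp only [Set.mem_Iio]
    by_contra h
    have : π j = 0 := hN j (by omega)
    omega
  have := downward_eq_Icc _ hfin (by simp) ?_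
  · exact this
  · intro j k hj hk hkj
    exact ⟨hk, le_trans hj.2 (hπ.2.1 k j hk hkj)⟩

lemma conj_galois {π : ℕ → ℕ} (hπ : IsPartition π) {i j : ℕ} (hi : 1 ≤ i) (hj : 1 ≤ j) :
    j ≤ conj π i ↔ i ≤ π j := by
  have h := conj_set_eq hπ hi
  have := Set.ext_iff.mp h j
  simp only [Set.mem_setOf_eq, Set.mem_Icc] at this
  omega

lemma conj_zero (π : ℕ → ℕ) : conj π 0 = 0 := by
  have : {j : ℕ | 1 ≤ j ∧ 0 ≤ π j} = Set.Ici 1 := by ext j; simp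
  rw [conj, this]
  exact Set.Infinite.ncard (Set.Ici_infinite 1)

lemma conj_anti {π : ℕ → ℕ} (hπ : IsPartition π) {i j : ℕ} (hi : 1 ≤ i) (hij : i ≤ j) :
    conj π j ≤ conj π i := by
  rcases Nat.eq_zero_or_pos (conj π j) with h | h
  · omega
  · rw [conj_galois hπ hi h]
    have := (conj_galois hπ (by omega : 1 ≤ j) h).mp le_rfl
    omega

/-- `π j = 0` for `j > len π` (here stated via `conj π 1`). -/
lemma part_zero_of_gt_len {π : ℕ → ℕ} (hπ : IsPartition π) {j : ℕ} (hj : conj π 1 < j) :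
    π j = 0 := by
  by_contra h
  have h1 : 1 ≤ j := by omega
  have := (conj_galois hπ le_rfl h1).mpr (by omega)
  omega

lemma durfee_mem {π : ℕ → ℕ} (hπ : IsPartition π) : durfee π ≤ π (durfee π) := by
  have hbdd : BddAbove {d : ℕ | d ≤ π d} := by
    refine ⟨π 1, ?_⟩
    intro d hd
    simp only [Set.mem_setOf_eq] at hd
    rcases Nat.eq_zero_or_pos d with rfl | h1
    · omega
    · exact le_trans hd (hπ.2.1 1 d le_rfl h1)
  exact Nat.sSup_mem ⟨0, by simp⟩ hbdd

lemma le_durfee {π : ℕ → ℕ} (hπ : IsPartition π) {k : ℕ} (hk : k ≤ π k) : k ≤ durfee π := by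
  have hbdd : BddAbove {d : ℕ | d ≤ π d} := by
    refine ⟨π 1, ?_⟩
    intro d hd
    simp only [Set.mem_setOf_eq] at hd
    rcases Nat.eq_zero_or_pos d with rfl | h1
    · omega
    · exact le_trans hd (hπ.2.1 1 d le_rfl h1)
  exact le_csSup hbdd hk

lemma durfee_succ {π : ℕ → ℕ} (hπ : IsPartition π) : π (durfee π + 1) ≤ durfee π := by
  by_contra h
  have := le_durfee hπ (by omega : durfee π + 1 ≤ π (durfee π + 1))
  omega

lemma part_le_durfee {π : ℕ → ℕ} (hπ : IsPartition π) {j : ℕ} (hj : durfee π < j) :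
    π j ≤ durfee π := by
  exact le_trans (hπ.2.1 (durfee π + 1) j (by omega) (by omega)) (durfee_succ hπ)

lemma durfee_le_part {π : ℕ → ℕ} (hπ : IsPartition π) {i : ℕ} (hi : 1 ≤ i)
    (hid : i ≤ durfee π) : durfee π ≤ π i := by
  exact le_trans (durfee_mem hπ) (hπ.2.1 i (durfee π) hi hid)

lemma durfee_le_conj {π : ℕ → ℕ} (hπ : IsPartition π) {i : ℕ} (hi : 1 ≤ i)
    (hid : i ≤ durfee π) : durfee π ≤ conj π i := by
  have hd1 : 1 ≤ durfee π := le_trans hi hid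
  have h1 : durfee π ≤ conj π (durfee π) :=
    (conj_galois hπ hd1 hd1).mpr (durfee_mem hπ)
  exact le_trans h1 (conj_anti hπ hi hid)

lemma size_eq_sum {π : ℕ → ℕ} {N : ℕ} (hN : ∀ j, N ≤ j → π j = 0) :
    size π = ∑ j ∈ Finset.range N, π j := by
  apply tsum_eq_sum
  intro j hj
  exact hN j (by simpa using hj)

/-- tail formula: for `j > d`, `π j` counts `i ∈ [1,d]` with `conj π i ≥ j`. -/
lemma tail_formula {π : ℕ → ℕ} (hπ : IsPartition π) {j : ℕ} (hj : durfee π < j) :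
    π j = ((Finset.Icc 1 (durfee π)).filter (fun i => j ≤ conj π i)).card := by
  have hj1 : 1 ≤ j := by omega
  have hle : π j ≤ durfee π := part_le_durfee hπ hj
  have : (Finset.Icc 1 (durfee π)).filter (fun i => j ≤ conj π i) = Finset.Icc 1 (π j) := by
    ext i
    simp only [Finset.mem_filter, Finset.mem_Icc]
    constructor
    · rintro ⟨⟨h1, h2⟩, h3⟩
      exact ⟨h1, (conj_galois hπ h1 hj1).mp h3⟩
    · rintro ⟨h1, h2⟩
      exact ⟨⟨h1, by omega⟩, (conj_galois hπ h1 hj1).mpr h2⟩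
  rw [this, Nat.card_Icc]
  omega

/-- Durfee decomposition. -/
lemma durfee_decomp {π : ℕ → ℕ} (hπ : IsPartition π) :
    size π + durfee π * durfee π = ∑ i ∈ Finset.Icc 1 (durfee π), (π i + conj π i) := by
  classical
  set d := durfee π with hd
  obtain ⟨N₀, hN₀⟩ := hπ.2.2
  set N := N₀ + d + conj π 1 + 1 with hN
  have hzero : ∀ j, N ≤ j → π j = 0 := fun j hjN => hN₀ j (by omega)
  have hconjN : ∀ i, 1 ≤ i → conj π i ≤ N := by
    intro i hi
    exact le_trans (conj_anti hπ le_rfl hi) (by omega)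
  -- size as sum over Ioc 0 N
  have h1 : size π = ∑ j ∈ Finset.Ioc 0 N, π j := by
    rw [size_eq_sum (N := N + 1) (fun j hj => hzero j (by omega))]
    have hins : Finset.range (N + 1) = insert 0 (Finset.Ioc 0 N) := by
      ext x; simp [Finset.mem_range, Finset.mem_Ioc]
    rw [hins, Finset.sum_insert (by simp), hπ.1, zero_add]
  have hdN : d ≤ N := by omega
  have hsplit : (∑ j ∈ Finset.Ioc 0 d, π j) + (∑ j ∈ Finset.Ioc d N, π j)
      = ∑ j ∈ Finset.Ioc 0 N, π j := Finset.sum_Ioc_consecutive _ (by omega) hdN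
  have hIcc : Finset.Ioc 0 d = Finset.Icc 1 d := by
    ext x; simp [Finset.mem_Ioc, Finset.mem_Icc]; omega
  -- tail sum
  have htail : ∑ j ∈ Finset.Ioc d N, π j = ∑ i ∈ Finset.Icc 1 d, (conj π i - d) := by
    have step1 : ∀ j ∈ Finset.Ioc d N, π j = ∑ i ∈ Finset.Icc 1 d, if j ≤ conj π i then 1 else 0 := by
      intro j hj
      simp only [Finset.mem_Ioc] at hj
      rw [tail_formula hπ hj.1, Finset.card_filter]
    rw [Finset.sum_congr rfl step1, Finset.sum_comm]
    apply Finset.sum_congr rfl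
    intro i hi
    simp only [Finset.mem_Icc] at hi
    have : ∑ j ∈ Finset.Ioc d N, (if j ≤ conj π i then 1 else 0)
        = ((Finset.Ioc d N).filter (fun j => j ≤ conj π i)).card := by
      rw [Finset.card_filter]
    rw [this]
    have : (Finset.Ioc d N).filter (fun j => j ≤ conj π i) = Finset.Ioc d (conj π i) := by
      ext j
      simp only [Finset.mem_filter, Finset.mem_Ioc]
      have := hconjN i hi.1
      omega
    rw [this, Nat.card_Ioc]
  have hconjd : ∀ i ∈ Finset.Icc 1 d, d ≤ conj π i := by
    intro i hi
    simp only [Finset.mem_Icc] at hi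
    exact durfee_le_conj hπ hi.1 hi.2
  have hfinal : (∑ i ∈ Finset.Icc 1 d, (conj π i - d)) + d * d = ∑ i ∈ Finset.Icc 1 d, conj π i := by
    rw [show d * d = ∑ _i ∈ Finset.Icc 1 d, d by rw [Finset.sum_const, Nat.card_Icc, Nat.add_sub_cancel, smul_eq_mul]]
    rw [← Finset.sum_add_distrib]
    apply Finset.sum_congr rfl
    intro i hi
    have := hconjd i hi
    omega
  rw [h1, ← hsplit, htail, hIcc, Finset.sum_add_distrib]
  omega

lemma two_i_le {π : ℕ → ℕ} (hπ : IsPartition π) {i : ℕ} (hi : 1 ≤ i) (hid : i ≤ durfee π) :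
    2 * i ≤ π i + conj π i := by
  have h1 := durfee_le_part hπ hi hid
  have h2 := durfee_le_conj hπ hi hid
  omega

lemma sum_odd (d : ℕ) : ∑ i ∈ Finset.Icc 1 d, (2 * i - 1) = d * d := by
  induction d with
  | zero => simp
  | succ d ih =>
    rw [Finset.sum_Icc_succ_top (by omega), ih]
    ring_nf
    omega

lemma size_angPart {π : ℕ → ℕ} (hπ : IsPartition π) : size (angPart π) = size π := by
  set d := durfee π with hd
  have h1 : size (angPart π) = ∑ i ∈ Finset.Icc 1 d, angPart π i := by
    apply tsum_eq_sum
    intro i hi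
    simp only [Finset.mem_Icc] at hi
    rw [angPart]
    rw [if_neg (by omega)]
  rw [h1]
  have h2 : (∑ i ∈ Finset.Icc 1 d, angPart π i) + d * d
      = ∑ i ∈ Finset.Icc 1 d, (π i + conj π i) := by
    rw [← sum_odd d, ← Finset.sum_add_distrib]
    apply Finset.sum_congr rfl
    intro i hi
    simp only [Finset.mem_Icc] at hi
    have := two_i_le hπ hi.1 hi.2
    rw [angPart, if_pos ⟨hi.1, hi.2⟩]
    omega
  have h3 := durfee_decomp hπ
  rw [← hd] at h3
  omega

lemma isPartition_angPart {π : ℕ → ℕ} (hπ : IsPartition π) : IsPartition (angPart π) := by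
  refine ⟨by simp [angPart], ?_, ⟨durfee π + 1, ?_⟩⟩
  · intro i j hi hij
    by_cases hj : j ≤ durfee π
    · have hi' : i ≤ durfee π := by omega
      rw [angPart, angPart, if_pos (⟨by omega, hj⟩ : 1 ≤ j ∧ j ≤ durfee π), if_pos (⟨hi, hi'⟩ : 1 ≤ i ∧ i ≤ durfee π)]
      have h1 := hπ.2.1 i j hi hij
      have h2 := conj_anti hπ hi hij
      have h3 := two_i_le hπ (by omega : (1:ℕ) ≤ j) hj
      omega
    · rw [angPart, if_neg (by omega)]
      omega
  · intro j hj
    rw [angPart, if_neg (by omega)]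

lemma angPart_pos {π : ℕ → ℕ} (hπ : IsPartition π) {i : ℕ} (hi : 1 ≤ i)
    (hid : i ≤ durfee π) : 1 ≤ angPart π i := by
  rw [angPart, if_pos ⟨hi, hid⟩]
  have := two_i_le hπ hi hid
  omega

lemma len_angPart {π : ℕ → ℕ} (hπ : IsPartition π) : len (angPart π) = durfee π := by
  rw [len, conj]
  have : {j : ℕ | 1 ≤ j ∧ 1 ≤ angPart π j} = Set.Icc 1 (durfee π) := by
    ext j
    simp only [Set.mem_setOf_eq, Set.mem_Icc]
    constructor
    · rintro ⟨h1, h2⟩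
      refine ⟨h1, ?_⟩
      by_contra h
      rw [angPart, if_neg (by omega)] at h2
      omega
    · rintro ⟨h1, h2⟩
      exact ⟨h1, angPart_pos hπ h1 h2⟩
  rw [this, ← Finset.coe_Icc, Set.ncard_coe_finset, Nat.card_Icc]
  omega

lemma angPart_gap {π : ℕ → ℕ} (hπ : IsPartition π) {i : ℕ} (hi : 1 ≤ i)
    (hid : i + 1 ≤ durfee π) : angPart π (i + 1) + 2 ≤ angPart π i := by
  rw [angPart, angPart, if_pos (⟨by omega, hid⟩ : 1 ≤ i + 1 ∧ i + 1 ≤ durfee π), if_pos (⟨hi, by omega⟩ : 1 ≤ i ∧ i ≤ durfee π)]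
  have h1 := hπ.2.1 i (i+1) hi (by omega)
  have h2 := conj_anti hπ hi (by omega : i ≤ i + 1)
  have h3 := two_i_le hπ (by omega : (1:ℕ) ≤ i + 1) hid
  omega

lemma angPart_inj {π σ : ℕ → ℕ} (hπ : IsPartition π) (hσ : IsPartition σ)
    (hrπ : ∀ i, 1 ≤ i → i ≤ durfee π → rank π i ∈ ({0, 1} : Set ℤ))
    (hrσ : ∀ i, 1 ≤ i → i ≤ durfee σ → rank σ i ∈ ({0, 1} : Set ℤ))
    (heq : angPart π = angPart σ) : π = σ := by
  classical
  have hd : durfee π = durfee σ := by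
    have := congrArg len heq
    rwa [len_angPart hπ, len_angPart hσ] at this
  set d := durfee π with hdd
  have hpart : ∀ i, 1 ≤ i → i ≤ d → π i = σ i ∧ conj π i = conj σ i := by
    intro i hi hid
    have h1 := congrFun heq i
    rw [angPart, angPart, if_pos ⟨hi, hid⟩, if_pos (⟨hi, hd ▸ hid⟩ : 1 ≤ i ∧ i ≤ durfee σ)] at h1
    have h2 := two_i_le hπ hi hid
    have h3 := two_i_le hσ hi (hd ▸ hid)
    have h4 := hrπ i hi hid
    have h5 := hrσ i hi (hd ▸ hid)
    simp only [Set.mem_insert_iff, Set.mem_singleton_iff, rank] at h4 h5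
    have h4' : π i = conj π i ∨ π i = conj π i + 1 := by omega
    have h5' : σ i = conj σ i ∨ σ i = conj σ i + 1 := by omega
    constructor <;> omega
  funext j
  rcases Nat.eq_zero_or_pos j with rfl | hj1
  · rw [hπ.1, hσ.1]
  by_cases hjd : j ≤ d
  · exact (hpart j hj1 hjd).1
  · rw [tail_formula hπ (by omega : durfee π < j), tail_formula hσ (by rw [← hd]; omega)]
    rw [← hd, ← hdd]
    congr 1
    apply Finset.filter_congr
    intro x hx
    simp only [Finset.mem_Icc] at hx
    rw [(hpart x hx.1 hx.2).2]

def aF (α : ℕ → ℕ) (i : ℕ) : ℕ := (α i + 2 * i - 1 + (α i + 1) % 2) / 2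
def bF (α : ℕ → ℕ) (i : ℕ) : ℕ := (α i + 2 * i - 1 - (α i + 1) % 2) / 2

noncomputable def invP (α : ℕ → ℕ) (j : ℕ) : ℕ :=
  if j = 0 then 0
  else if j ≤ len α then aF α j
  else ((Finset.Icc 1 (len α)).filter (fun i => j ≤ bF α i)).card

section Inverse

variable {α : ℕ → ℕ} (hα : IsPartition α)
variable (hgap : ∀ i, 1 ≤ i → i + 1 ≤ len α → α (i + 1) + 2 ≤ α i)

include hα in
lemma alpha_len_pos (hd : 1 ≤ len α) : 1 ≤ α (len α) :=
  (conj_galois hα le_rfl hd).mp le_rfl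

include hα hgap in
lemma chain : ∀ i, 1 ≤ i → i ≤ len α → 2 * (len α - i) + 1 ≤ α i := by
  have key : ∀ k i, 1 ≤ i → i ≤ len α → len α - i ≤ k → 2 * (len α - i) + 1 ≤ α i := by
    intro k
    induction k with
    | zero =>
      intro i h1 h2 h3
      have : i = len α := by omega
      subst this
      have := alpha_len_pos hα h1
      omega
    | succ k ih =>
      intro i h1 h2 h3
      by_cases h : len α - i ≤ k
      · exact ih i h1 h2 h
      · have hi1 : i + 1 ≤ len α := by omega
        have := ih (i + 1) (by omega) hi1 (by omega)
        have := hgap i h1 hi1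
        omega
  intro i h1 h2
  exact key (len α - i) i h1 h2 le_rfl

include hα hgap in
lemma aF_bF_facts {i : ℕ} (h1 : 1 ≤ i) (h2 : i ≤ len α) :
    len α ≤ bF α i ∧ bF α i ≤ aF α i ∧ aF α i ≤ bF α i + 1 ∧
    2 * aF α i = α i + 2 * i - 1 + (α i + 1) % 2 ∧
    2 * bF α i = α i + 2 * i - 1 - (α i + 1) % 2 := by
  have hch := chain hα hgap i h1 h2
  unfold aF bF
  omega

include hα hgap in
lemma aF_bF_step {i : ℕ} (h1 : 1 ≤ i) (h2 : i + 1 ≤ len α) :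
    aF α (i + 1) ≤ aF α i ∧ bF α (i + 1) ≤ bF α i := by
  have hg := hgap i h1 h2
  have f1 := aF_bF_facts hα hgap h1 (by omega)
  have f2 := aF_bF_facts hα hgap (by omega : 1 ≤ i + 1) h2
  omega

include hα hgap in
lemma aF_anti {i j : ℕ} (h1 : 1 ≤ i) (hij : i ≤ j) (h2 : j ≤ len α) :
    aF α j ≤ aF α i ∧ bF α j ≤ bF α i := by
  have key : ∀ k j, j = i + k → j ≤ len α → aF α j ≤ aF α i ∧ bF α j ≤ bF α i := by
    intro k
    induction k with
    | zero => intro j hj _; subst hj; simp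
    | succ k ih =>
      intro j hj h2
      subst hj
      have hA := ih (i + k) rfl (by omega)
      have hB := aF_bF_step hα hgap (by omega : 1 ≤ i + k) (by omega : i + k + 1 ≤ len α)
      rw [show i + (k + 1) = i + k + 1 from rfl]
      exact ⟨by omega, by omega⟩
  exact key (j - i) j (by omega) h2

lemma invP_in (j : ℕ) (h1 : 1 ≤ j) (h2 : j ≤ len α) : invP α j = aF α j := by
  rw [invP, if_neg (by omega), if_pos h2]

lemma invP_out (j : ℕ) (h2 : len α < j) :
    invP α j = ((Finset.Icc 1 (len α)).filter (fun i => j ≤ bF α i)).card := by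
  rw [invP, if_neg (by omega), if_neg (by omega)]

include hα hgap in
lemma invP_anti : ∀ i j, 1 ≤ i → i ≤ j → invP α j ≤ invP α i := by
  intro i j h1 hij
  by_cases hjd : j ≤ len α
  · rw [invP_in i h1 (by omega), invP_in j (by omega) hjd]
    exact (aF_anti hα hgap h1 hij hjd).1
  · rw [invP_out j (by omega)]
    by_cases hid : i ≤ len α
    · rw [invP_in i h1 hid]
      have hc : ((Finset.Icc 1 (len α)).filter (fun k => j ≤ bF α k)).card ≤ len α := by
        calc _ ≤ (Finset.Icc 1 (len α)).card := Finset.card_filter_le _ _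
        _ = len α := by rw [Nat.card_Icc]; omega
      have := aF_bF_facts hα hgap h1 hid
      omega
    · rw [invP_out i (by omega)]
      apply Finset.card_le_card
      intro k hk
      simp only [Finset.mem_filter] at hk ⊢
      exact ⟨hk.1, by omega⟩

include hα hgap in
lemma isPartition_invP : IsPartition (invP α) := by
  refine ⟨by rw [invP, if_pos rfl], invP_anti hα hgap, ⟨bF α 1 + len α + 2, ?_⟩⟩
  intro j hj
  rw [invP_out j (by omega)]
  rw [Finset.filter_false_of_mem, Finset.card_empty]
  intro i hi
  simp only [Finset.mem_Icc] at hi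
  have := (aF_anti hα hgap le_rfl hi.1 hi.2).2
  omega

include hα hgap in
lemma conj_invP {i : ℕ} (h1 : 1 ≤ i) (h2 : i ≤ len α) : conj (invP α) i = bF α i := by
  have hset : {j : ℕ | 1 ≤ j ∧ i ≤ invP α j} = Set.Icc 1 (bF α i) := by
    ext j
    simp only [Set.mem_setOf_eq, Set.mem_Icc]
    have hbi := aF_bF_facts hα hgap h1 h2
    constructor
    · rintro ⟨hj1, hj2⟩
      refine ⟨hj1, ?_⟩
      by_cases hjd : j ≤ len α
      · omega
      · rw [invP_out j (by omega)] at hj2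
        by_contra hcon
        have hsub : (Finset.Icc 1 (len α)).filter (fun k => j ≤ bF α k) ⊆ Finset.Icc 1 (i - 1) := by
          intro k hk
          simp only [Finset.mem_filter, Finset.mem_Icc] at hk ⊢
          refine ⟨hk.1.1, ?_⟩
          by_contra hki
          have := (aF_anti hα hgap h1 (by omega : i ≤ k) hk.1.2).2
          omega
        have := Finset.card_le_card hsub
        rw [Nat.card_Icc] at this
        omega
    · rintro ⟨hj1, hj2⟩
      refine ⟨hj1, ?_⟩
      by_cases hjd : j ≤ len α
      · rw [invP_in j hj1 hjd]
        have hfd := aF_bF_facts hα hgap (le_trans h1 h2 : 1 ≤ len α) le_rfl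
        have := (aF_anti hα hgap hj1 hjd le_rfl).1
        omega
      · rw [invP_out j (by omega)]
        have hsub : Finset.Icc 1 i ⊆ (Finset.Icc 1 (len α)).filter (fun k => j ≤ bF α k) := by
          intro k hk
          simp only [Finset.mem_filter, Finset.mem_Icc] at hk ⊢
          have := (aF_anti hα hgap hk.1 hk.2 h2).2
          exact ⟨⟨hk.1, by omega⟩, by omega⟩
        have := Finset.card_le_card hsub
        rw [Nat.card_Icc] at this
        omega
  rw [conj, hset, ← Finset.coe_Icc, Set.ncard_coe_finset, Nat.card_Icc]
  omega

include hα hgap in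
lemma durfee_invP : durfee (invP α) = len α := by
  have hP := isPartition_invP hα hgap
  apply le_antisymm
  · by_contra h
    have h1 : len α + 1 ≤ durfee (invP α) := by omega
    have h2 := durfee_mem hP
    have h3 : invP α (durfee (invP α)) ≤ invP α (len α + 1) :=
      invP_anti hα hgap _ _ (by omega) h1
    have h4 : invP α (len α + 1) ≤ len α := by
      rw [invP_out _ (by omega)]
      calc _ ≤ (Finset.Icc 1 (len α)).card := Finset.card_filter_le _ _
      _ = len α := by rw [Nat.card_Icc]; omega
    omega
  · rcases Nat.eq_zero_or_pos (len α) with h | h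
    · omega
    · apply le_durfee hP
      rw [invP_in _ h le_rfl]
      have := aF_bF_facts hα hgap h le_rfl
      omega

include hα hgap in
lemma angPart_invP : angPart (invP α) = α := by
  have hd := durfee_invP hα hgap
  funext i
  rcases Nat.eq_zero_or_pos i with rfl | h1
  · rw [angPart, if_neg (by omega), hα.1]
  by_cases h2 : i ≤ len α
  · rw [angPart, if_pos ⟨h1, by omega⟩]
    rw [invP_in _ h1 h2, conj_invP hα hgap h1 h2]
    have := aF_bF_facts hα hgap h1 h2
    omega
  · rw [angPart, if_neg (by omega)]
    exact (part_zero_of_gt_len hα (by rw [← len]; omega)).symm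

include hα hgap in
lemma rank_invP {i : ℕ} (h1 : 1 ≤ i) (h2 : i ≤ durfee (invP α)) :
    rank (invP α) i ∈ ({0, 1} : Set ℤ) := by
  have hd := durfee_invP hα hgap
  have h2' : i ≤ len α := by omega
  rw [rank, invP_in _ h1 h2', conj_invP hα hgap h1 h2']
  have := aF_bF_facts hα hgap h1 h2'
  simp only [Set.mem_insert_iff, Set.mem_singleton_iff]
  omega

include hα hgap in
lemma size_invP : size (invP α) = size α := by
  rw [← size_angPart (isPartition_invP hα hgap), angPart_invP hα hgap]

end Inverse

theorem stmt7 (n : ℕ) :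
    {π | IsPartition π ∧ size π = n ∧
        ∀ i, 1 ≤ i → i ≤ durfee π → rank π i ∈ ({0, 1} : Set ℤ)}.ncard =
    {α | IsPartition α ∧ size α = n ∧
        (∀ i, 1 ≤ i → i + 1 ≤ len α → α (i + 1) + 2 ≤ α i)}.ncard := by
  have himg : {α | IsPartition α ∧ size α = n ∧
      (∀ i, 1 ≤ i → i + 1 ≤ len α → α (i + 1) + 2 ≤ α i)} =
      angPart '' {π | IsPartition π ∧ size π = n ∧
        ∀ i, 1 ≤ i → i ≤ durfee π → rank π i ∈ ({0, 1} : Set ℤ)} := by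
    ext α
    simp only [Set.mem_setOf_eq, Set.mem_image]
    constructor
    · rintro ⟨hα, hsize, hgap⟩
      refine ⟨invP α, ⟨isPartition_invP hα hgap, ?_, ?_⟩, angPart_invP hα hgap⟩
      · rw [size_invP hα hgap]; exact hsize
      · intro i hi hid
        exact rank_invP hα hgap hi hid
    · rintro ⟨π, ⟨hπ, hs, _⟩, rfl⟩
      refine ⟨isPartition_angPart hπ, ?_, ?_⟩
      · rw [size_angPart hπ]; exact hs
      · intro i hi hid
        rw [len_angPart hπ] at hid
        exact angPart_gap hπ hi hid
  rw [himg]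
  refine (Set.ncard_image_of_injOn ?_).symm
  intro π hπ σ hσ h
  exact angPart_inj hπ.1 hσ.1 hπ.2.2 hσ.2.2 h
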